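/- arXiv:2406.18473 — 8 statements merged into one kernel-verified Lean document; each statement's English description precedes it below -/
import Mathlib

section
/- A nonempty word w is an anti-Lyndon word (i.e., a Lyndon word with respect to the inverse lexicographic order) if and only if w is an unbordered inverse Lyndon word. -/
open List

variable {α : Type*} [LinearOrder α]

/-- `x ≺ y`: lexicographic order on words. -/
def Prec (x y : List α) : Prop := List.Lex (· < ·) x y

/-- Lexicographic order induced by the inverse alphabet order. -/
def PrecIn (x y : List α) : Prop := List.Lex (fun a b : α => b < a) x y

/-- `x ≪ y`: `x ≺ y` and `x` is not a proper prefix of `y`. -/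
def LLt (x y : List α) : Prop := Prec x y ∧ ¬ (x <+: y ∧ x ≠ y)

/-- `b` is a border of `w`: a proper prefix and a suffix of `w`. -/
def IsBorder (b w : List α) : Prop := b <+: w ∧ b ≠ w ∧ b <:+ w

/-- `w` has no nonempty border. -/
def Unbordered (w : List α) : Prop := ∀ b : List α, b ≠ [] → ¬ IsBorder b w

/-- Lyndon word: smaller than each nonempty proper suffix. -/
def IsLyndon (w : List α) : Prop :=
  w ≠ [] ∧ ∀ s : List α, s <:+ w → s ≠ w → s ≠ [] → Prec w s

/-- Anti-Lyndon word: Lyndon w.r.t. the inverse lexicographic order. -/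
def IsAntiLyndon (w : List α) : Prop :=
  w ≠ [] ∧ ∀ s : List α, s <:+ w → s ≠ w → s ≠ [] → PrecIn w s

/-- Inverse Lyndon word: each nonempty proper suffix is smaller. -/
def IsInvLyndon (w : List α) : Prop :=
  w ≠ [] ∧ ∀ s : List α, s <:+ w → s ≠ w → s ≠ [] → Prec s w

/-- Inverse Lyndon factorization of `w`. -/
def IsInvLyndonFact (ms : List (List α)) (w : List α) : Prop :=
  ms ≠ [] ∧ ms.flatten = w ∧ (∀ m ∈ ms, IsInvLyndon m) ∧ List.Chain' LLt ms

/-- The border property of a factorization. -/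
def BorderProp (ms : List (List α)) : Prop :=
  List.Chain' (fun u v => ∀ b : List α, b ≠ [] → IsBorder b u → ¬ b <+: v) ms

lemma lex_swap_aux {r : α → α → Prop} :
    ∀ {x y : List α}, List.Lex r x y → x <+: y ∨ List.Lex (fun a b => r b a) y x := by
  intro x y h
  induction h with
  | nil => exact Or.inl (List.nil_prefix ..)
  | rel h => exact Or.inr (List.Lex.rel h)
  | @cons a l₁ l₂ h ih =>
    rcases ih with h1 | h1
    · rcases h1 with ⟨t, rfl⟩
      exact Or.inl ⟨t, rfl⟩
    · exact Or.inr (List.Lex.cons h1)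

lemma not_lex_of_prefix_aux {r : α → α → Prop} (hirr : ∀ a, ¬ r a a) :
    ∀ {x y : List α}, x <+: y → ¬ List.Lex r y x := by
  intro x y hp hl
  induction hl with
  | nil => simp [List.prefix_nil] at hp
  | @rel a l₁ b l₂ h =>
    rw [List.cons_prefix_cons] at hp
    exact hirr a (hp.1 ▸ h)
  | @cons a l₁ l₂ h ih =>
    rw [List.cons_prefix_cons] at hp
    exact ih hp.2

theorem stmt4 (w : List α) (hw : w ≠ []) :
    IsAntiLyndon w ↔ IsInvLyndon w ∧ Unbordered w := by
  constructor
  · rintro ⟨-, h⟩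
    refine ⟨⟨hw, ?_⟩, ?_⟩
    · intro s hs hne hns
      have hp := h s hs hne hns
      rcases lex_swap_aux hp with h1 | h1
      · exfalso
        have h2 : w.length ≤ s.length := h1.length_le
        have h3 : s.length ≤ w.length := hs.length_le
        exact hne (List.IsSuffix.eq_of_length hs (le_antisymm h3 h2))
      · exact h1
    · rintro b hb ⟨hpre, hne, hsuf⟩
      exact not_lex_of_prefix_aux (r := fun a b : α => b < a) (fun a => lt_irrefl a) hpre (h b hsuf hne hb)
  · rintro ⟨⟨-, hinv⟩, hub⟩
    refine ⟨hw, fun s hs hne hns => ?_⟩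
    have hp := hinv s hs hne hns
    rcases lex_swap_aux hp with h1 | h1
    · exact absurd ⟨h1, hne, hs⟩ (hub s hns)
    · exact h1
end

section
/- Every nonempty prefix of an inverse Lyndon word is an inverse Lyndon word. -/
open List

variable {α : Type*} [LinearOrder α]

private lemma lex_of_prefix_ne {r : α → α → Prop} : ∀ (s p : List α), s <+: p → s ≠ p →
    List.Lex r s p := by
  intro s p hsp hne
  obtain ⟨u, rfl⟩ := hsp
  induction s with
  | nil =>
    cases u with
    | nil => exact absurd rfl hne
    | cons c cs => exact List.Lex.nil
  | cons a s ih =>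
    exact List.Lex.cons (ih (by simpa using hne))

private lemma lex_append_cancel {r : α → α → Prop} :
    ∀ (s p t u : List α), s.length ≤ p.length → List.Lex r (s ++ t) (p ++ u) →
      List.Lex r s p ∨ s <+: p := by
  intro s
  induction s with
  | nil => intro p t u _ _; exact Or.inr (List.nil_prefix)
  | cons a s ih =>
    intro p t u hlen hlex
    cases p with
    | nil => simp at hlen
    | cons b p =>
      cases hlex with
      | rel h => exact Or.inl (List.Lex.rel h)
      | cons h =>
        rcases ih p t u (by simpa using hlen) h with h' | h'
        · exact Or.inl (List.Lex.cons h')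
        · exact Or.inr (List.cons_prefix_cons.mpr ⟨rfl, h'⟩)

theorem stmt5 (w p : List α) (hw : IsInvLyndon w) (hp : p <+: w) (hpne : p ≠ []) :
    IsInvLyndon p := by
  refine ⟨hpne, fun s hs hsne hsnil => ?_⟩
  obtain ⟨t, rfl⟩ := hp
  obtain ⟨u, hu⟩ := hs
  by_cases hpre : s <+: p
  · exact lex_of_prefix_ne s p hpre hsne
  · have hlen : s.length < p.length := by
      have := List.IsSuffix.length_le ⟨u, hu⟩
      rcases lt_or_eq_of_le this with h | h
      · exact h
      · exact absurd (List.IsSuffix.eq_of_length ⟨u, hu⟩ h) hsne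
    have hsuf : s ++ t <:+ p ++ t := ⟨u, by rw [← List.append_assoc, hu]⟩
    have hne : s ++ t ≠ p ++ t := by
      intro h
      have := congrArg List.length h
      simp at this
      omega
    have := hw.2 (s ++ t) hsuf hne (by simp [hsnil])
    rcases lex_append_cancel s p t t hlen.le this with h | h
    · exact h
    · exact absurd h hpre
end

section
/- Let (m_1, …, m_k) be an inverse Lyndon factorization of a nonempty word w that has the border property. If α is a nonempty border of m_j for some 1 ≤ j ≤ k−1, then there exists a nonempty prefix β of m_{j+1} with |β| ≤ |α| and α ≪ β. -/
open List

variable {α : Type*} [LinearOrder α]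

private lemma lex_append_left' {r : α → α → Prop} (p : List α) {s t : List α}
    (h : List.Lex r s t) : List.Lex r (p ++ s) (p ++ t) := by
  induction p with
  | nil => simpa
  | cons x xs ih => exact List.Lex.cons ih

private lemma lex_cases {r : α → α → Prop} {x y : List α} (h : List.Lex r x y) :
    x <+: y ∨ ∃ p c d u v, x = p ++ c :: u ∧ y = p ++ d :: v ∧ r c d := by
  induction h with
  | nil => exact Or.inl (List.nil_prefix)
  | @cons a l₁ l₂ _ ih =>
      rcases ih with hp | ⟨p, c, d, u, v, h1, h2, h3⟩
      · exact Or.inl (List.cons_prefix_cons.mpr ⟨rfl, hp⟩)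
      · exact Or.inr ⟨a :: p, c, d, u, v, by simp [h1], by simp [h2], h3⟩
  | @rel a₁ l₁ a₂ l₂ hr => exact Or.inr ⟨[], a₁, a₂, l₁, l₂, rfl, rfl, hr⟩

theorem stmt6 (w : List α) (ms : List (List α))
    (hf : IsInvLyndonFact ms w) (hb : BorderProp ms)
    (j : ℕ) (hj : j + 1 < ms.length)
    (a : List α) (ha : a ≠ []) (hab : IsBorder a (ms[j]'(Nat.lt_of_succ_lt hj))) :
    ∃ b : List α, b ≠ [] ∧ b <+: ms[j+1]'hj ∧ b.length ≤ a.length ∧ LLt a b := by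
  obtain ⟨hne, hjoin, hinv, hchain⟩ := hf
  have hll : LLt (ms[j]'(Nat.lt_of_succ_lt hj)) (ms[j+1]'hj) := by
    simp only [List.Chain'] at hchain
    rw [List.isChain_iff_getElem] at hchain
    have := hchain j (by omega)
    simpa using this
  have hbp : ¬ a <+: ms[j+1]'hj := by
    simp only [BorderProp, List.Chain'] at hb
    rw [List.isChain_iff_getElem] at hb
    have := hb j (by omega)
    simpa using this a ha hab
  obtain ⟨hprec, hnpp⟩ := hll
  rcases lex_cases hprec with hp | ⟨p, c, d, u, v, h1, h2, hcd⟩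
  · exfalso
    apply hnpp
    refine ⟨hp, ?_⟩
    intro heq
    rw [heq] at hprec
    exact irrefl_of (List.Lex (· < ·)) _ hprec
  · -- a is a prefix of ms[j] = p ++ c :: u
    obtain ⟨hpre, hane, hsuf⟩ := hab
    have hap : a <+: p ++ c :: u := h1 ▸ hpre
    by_cases hlen : a.length ≤ p.length
    · exfalso
      apply hbp
      have hpp : a <+: p := by
        have hpp2 : p <+: p ++ c :: u := List.prefix_append _ _
        exact (List.prefix_of_prefix_length_le hap hpp2 hlen)
      rw [h2]
      exact hpp.trans (List.prefix_append _ _)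
    · push_neg at hlen
      have hkey : p ++ [c] <+: a := by
        have h2p : p ++ [c] <+: p ++ c :: u := by
          simpa using (List.prefix_append (p ++ [c]) u)
        refine List.prefix_of_prefix_length_le h2p hap ?_
        simpa using hlen
      obtain ⟨u', hu'⟩ := hkey
      refine ⟨p ++ [d], by simp, ?_, ?_, ?_, ?_⟩
      · rw [h2]; simpa using (List.prefix_append (p ++ [d]) v)
      · simp; omega
      · rw [← hu', List.append_assoc]
        exact lex_append_left' p (by simpa using List.Lex.rel hcd)
      · rintro ⟨hpf, hne2⟩
        apply hne2
        apply hpf.eq_of_length_le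
        simp; omega
end

section
/- Every nonempty word w has at most one inverse Lyndon factorization with the border property: if (f_1, …, f_k) and (f'_1, …, f'_v) are both inverse Lyndon factorizations of w having the border property, then k = v and f_i = f'_i for all i. -/
open List

variable {α : Type*} [LinearOrder α]

lemma prec_asymm {x y : List α} (h1 : Prec x y) : ¬ Prec y x := by
  induction h1 with
  | nil =>
    intro h2; cases h2
  | rel hab =>
    intro h2
    cases h2 with
    | rel h => exact lt_asymm hab h
    | cons h => exact lt_irrefl _ hab
  | cons h ih =>
    intro h2
    cases h2 with
    | rel h' => exact lt_irrefl _ h'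
    | cons h' => exact ih h'

lemma prec_append_cons (r : List α) {a b : α} (s t : List α) (hab : a < b) :
    Prec (r ++ a :: s) (r ++ b :: t) := by
  induction r with
  | nil => exact List.Lex.rel hab
  | cons c r ih => exact List.Lex.cons ih

lemma prec_split {x y : List α} (h : Prec x y) :
    x <+: y ∨ ∃ (r s t : List α) (a b : α), a < b ∧ x = r ++ a :: s ∧ y = r ++ b :: t := by
  induction h with
  | nil => left; exact List.nil_prefix
  | @rel a l₁ b l₂ hab => right; exact ⟨[], l₁, l₂, a, b, hab, rfl, rfl⟩
  | @cons a l₁ l₂ h ih =>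
    rcases ih with hp | ⟨r, s, t, a', b', hab, hx, hy⟩
    · left; exact List.cons_prefix_cons.mpr ⟨rfl, hp⟩
    · right; exact ⟨a :: r, s, t, a', b', hab, by simp [hx], by simp [hy]⟩

lemma llt_split {x y : List α} (h : LLt x y) :
    ∃ (r s t : List α) (a b : α), a < b ∧ x = r ++ a :: s ∧ y = r ++ b :: t := by
  rcases prec_split h.1 with hp | hs
  · exact absurd ⟨hp, fun he => prec_asymm (he ▸ h.1) (he ▸ h.1)⟩ h.2
  · exact hs

lemma join_eq_nil_elim {L : List (List α)} (h : ∀ m ∈ L, m ≠ []) (hj : L.flatten = []) :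
    L = [] := by
  cases L with
  | nil => rfl
  | cons x L =>
    simp only [flatten_cons, append_eq_nil_iff] at hj
    exact absurd hj.1 (h x (by simp))

/-- The key descent lemma. -/
lemma step (d : ℕ) (P q2 : List α) (G H : List (List α)) (lam : List α) (a b : α)
    (hG1 : ∀ m ∈ P :: G, IsInvLyndon m) (hG2 : List.Chain' LLt (P :: G))
    (hG3 : BorderProp (P :: G))
    (hH1 : ∀ m ∈ q2 :: H, IsInvLyndon m) (hH2 : List.Chain' LLt (q2 :: H))
    (hH3 : BorderProp (q2 :: H))
    (hd0 : 0 < d) (hdP : d < P.length)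
    (hjoin : ((P :: G).flatten).drop d = (q2 :: H).flatten)
    (hab : a < b) (hla : lam ++ [a] <+: P.take d) (hlb : lam ++ [b] <+: q2) : False := by
  set q := P.drop d with hqdef
  have hqlen : q.length = P.length - d := by simp [hqdef]
  have hq0 : q ≠ [] := by
    intro h
    have : q.length = 0 := by rw [h]; rfl
    omega
  have hqneP : q ≠ P := by
    intro h
    have : q.length = P.length := by rw [h]
    omega
  have hqP : Prec q P := (hG1 P (by simp)).2 q (List.drop_suffix d P) hqneP hq0
  have hjoins : q ++ G.flatten = (q2 :: H).flatten := by
    have h1 : (P :: G).flatten = P ++ G.flatten := by simp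
    rw [h1, List.drop_append, Nat.sub_eq_zero_of_le (le_of_lt hdP),
      List.drop_zero] at hjoin
    exact hjoin
  have hqpre : q <+: (q2 :: H).flatten := ⟨G.flatten, hjoins⟩
  have hq2pre : q2 <+: (q2 :: H).flatten := ⟨H.flatten, by simp⟩
  have hlam_lt : lam.length < d := by
    have h := hla.length_le
    simp only [List.length_append, List.length_take, List.length_singleton] at h
    omega
  have hlaP : lam ++ [a] <+: P := hla.trans (List.take_prefix d P)
  have hlbj : lam ++ [b] <+: (q2 :: H).flatten := hlb.trans hq2pre
  have hlb_len : lam.length + 1 ≤ q2.length := by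
    have h := hlb.length_le
    simpa using h
  by_cases hcase : lam.length < q.length
  · -- the suffix q of P is long: immediate contradiction with inverse Lyndon property of P
    have hlbq : lam ++ [b] <+: q :=
      List.prefix_of_prefix_length_le hlbj hqpre (by simp; omega)
    obtain ⟨s, hs⟩ := hlaP
    obtain ⟨t, ht⟩ := hlbq
    have hPq : Prec P q := by
      rw [← hs, ← ht]
      simpa [List.append_assoc] using prec_append_cons lam (s := s) (t := t) hab
    exact prec_asymm hqP hPq
  · push_neg at hcase
    have hqlam : q <+: lam := by
      have h1 : q <+: lam ++ [b] := List.prefix_of_prefix_length_le hqpre hlbj (by simp; omega)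
      exact List.prefix_of_prefix_length_le h1 (List.prefix_append lam [b]) hcase
    have hlamP : lam <+: P := (List.prefix_append lam [a]).trans hlaP
    have hqPpre : q <+: P := hqlam.trans hlamP
    have hborder : IsBorder q P := ⟨hqPpre, hqneP, List.drop_suffix d P⟩
    have hGlen : 0 < G.flatten.length := by
      have h1 : (q2 :: H).flatten.length = q.length + G.flatten.length := by
        rw [← hjoins]; simp
      have h2 : lam.length + 1 ≤ (q2 :: H).flatten.length := by simpa using hlbj.length_le
      omega
    obtain ⟨g2, G'', hGeq⟩ : ∃ g2 G'', G = g2 :: G'' := by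
      cases G with
      | nil => simp at hGlen
      | cons g2 G'' => exact ⟨g2, G'', rfl⟩
    subst hGeq
    have hng : ¬ q <+: g2 := (List.isChain_cons_cons.mp hG3).1 q hq0 hborder
    have hPg : LLt P g2 := (List.isChain_cons_cons.mp hG2).1
    obtain ⟨lam', s', t', a', b', hab', hP', hg'⟩ := llt_split hPg
    have hlam'P : lam' ++ [a'] <+: P := ⟨s', by simp [hP']⟩
    have hlam'g : lam' ++ [b'] <+: g2 := ⟨t', by simp [hg']⟩
    have hlam'q : lam'.length < q.length := by
      by_contra hle
      push_neg at hle
      apply hng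
      have h1 : q <+: lam' := List.prefix_of_prefix_length_le hqPpre
        ((List.prefix_append lam' [a']).trans hlam'P) hle
      exact h1.trans ((List.prefix_append lam' [b']).trans hlam'g)
    have hla' : lam' ++ [a'] <+: q :=
      List.prefix_of_prefix_length_le hlam'P hqPpre (by simp; omega)
    have hq_q2 : q <+: q2 := List.prefix_of_prefix_length_le hqpre hq2pre (by omega)
    have htake : q2.take q.length = q := by
      obtain ⟨u, hu⟩ := hq_q2
      rw [← hu, List.take_left]
    have hjoin' : ((q2 :: H).flatten).drop q.length = (g2 :: G'').flatten := by
      rw [← hjoins, List.drop_left]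
    exact step q.length q2 g2 H G'' lam' a' b'
      hH1 hH2 hH3
      (fun m hm => hG1 m (by simp at hm ⊢; tauto))
      (List.isChain_cons_cons.mp hG2).2 (List.isChain_cons_cons.mp hG3).2
      (List.length_pos_iff.mpr hq0) (lt_of_le_of_lt hcase (by omega))
      hjoin' hab' (by rw [htake]; exact hla') hlam'g
termination_by d
decreasing_by exact lt_of_le_of_lt (Nat.le_of_not_lt hcase) hlam_lt

lemma no_strict (w : List α) (m m' : List α) (F F2 : List (List α))
    (h1 : IsInvLyndonFact (m :: F) w) (hb1 : BorderProp (m :: F))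
    (h2 : IsInvLyndonFact (m' :: F2) w) (hb2 : BorderProp (m' :: F2))
    (hpre : m <+: m') (hne : m ≠ m') : False := by
  obtain ⟨-, hj1, hinv1, hch1⟩ := h1
  obtain ⟨-, hj2, hinv2, hch2⟩ := h2
  have hm0 : m ≠ [] := (hinv1 m (by simp)).1
  have hm'len : m.length < m'.length :=
    lt_of_le_of_ne hpre.length_le (fun h => hne (hpre.eq_of_length h))
  cases F with
  | nil =>
    have hwm : w = m := by simpa using hj1.symm
    have hm'w : m' <+: w := by
      rw [← hj2]; exact ⟨F2.flatten, by simp⟩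
    have := hm'w.length_le
    rw [hwm] at this
    omega
  | cons m2 F'' =>
    have hch : LLt m m2 := (List.isChain_cons_cons.mp hch1).1
    obtain ⟨r, s, t, a, b, hab, hmeq, hm2eq⟩ := llt_split hch
    refine step m.length m' m2 F2 F'' r a b
      hinv2 hch2 hb2
      (fun x hx => hinv1 x (by simp at hx ⊢; tauto))
      (List.isChain_cons_cons.mp hch1).2 (List.isChain_cons_cons.mp hb1).2
      (List.length_pos_iff.mpr hm0) hm'len
      ?_ hab ?_ ⟨t, by simp [hm2eq]⟩
    · have hjc : (m :: m2 :: F'').flatten = m ++ (m2 :: F'').flatten := by simp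
      rw [hj2, ← hj1, hjc]
      exact List.drop_left
    · have hmt : m'.take m.length = m := by
        obtain ⟨u, hu⟩ := hpre
        rw [← hu, List.take_left]
      rw [hmt]
      exact ⟨s, by simp [hmeq]⟩

lemma heads_eq (w : List α) (m m' : List α) (F F2 : List (List α))
    (h1 : IsInvLyndonFact (m :: F) w) (hb1 : BorderProp (m :: F))
    (h2 : IsInvLyndonFact (m' :: F2) w) (hb2 : BorderProp (m' :: F2)) :
    m = m' := by
  by_contra hne
  have hmw : m <+: w := by
    rw [← h1.2.1]; exact ⟨F.flatten, by simp⟩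
  have hm'w : m' <+: w := by
    rw [← h2.2.1]; exact ⟨F2.flatten, by simp⟩
  rcases List.prefix_or_prefix_of_prefix hmw hm'w with h | h
  · exact no_strict w m m' F F2 h1 hb1 h2 hb2 h hne
  · exact no_strict w m' m F2 F h2 hb2 h1 hb1 h (Ne.symm hne)

lemma main_aux : ∀ (f1 : List (List α)) (w : List α) (f2 : List (List α)),
    w ≠ [] → IsInvLyndonFact f1 w → BorderProp f1 → IsInvLyndonFact f2 w → BorderProp f2 →
    f1 = f2 := by
  intro f1
  induction f1 with
  | nil =>
    intro w f2 hw h1 hb1 h2 hb2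
    exact absurd rfl h1.1
  | cons m F ih =>
    intro w f2 hw h1 hb1 h2 hb2
    obtain ⟨m', F2, rfl⟩ : ∃ m' F2, f2 = m' :: F2 := by
      cases f2 with
      | nil => exact absurd rfl h2.1
      | cons m' F2 => exact ⟨m', F2, rfl⟩
    obtain rfl : m = m' := heads_eq w m m' F F2 h1 hb1 h2 hb2
    have hjF : F.flatten = F2.flatten := by
      have h := h1.2.1.trans h2.2.1.symm
      simp only [flatten_cons] at h
      exact List.append_cancel_left h
    by_cases hF : F.flatten = []
    · have hFnil : F = [] :=
        join_eq_nil_elim (fun x hx => (h1.2.2.1 x (by simp [hx])).1) hF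
      have hF2nil : F2 = [] :=
        join_eq_nil_elim (fun x hx => (h2.2.2.1 x (by simp [hx])).1) (hjF ▸ hF)
      rw [hFnil, hF2nil]
    · have hFne : F ≠ [] := by
        intro h; rw [h] at hF; exact hF rfl
      have hF2ne : F2 ≠ [] := by
        intro h
        rw [h] at hjF
        exact hF (by simp [hjF])
      have hfact1 : IsInvLyndonFact F F.flatten :=
        ⟨hFne, rfl, fun x hx => h1.2.2.1 x (by simp [hx]), h1.2.2.2.tail⟩
      have hfact2 : IsInvLyndonFact F2 F.flatten :=
        ⟨hF2ne, hjF.symm, fun x hx => h2.2.2.1 x (by simp [hx]), h2.2.2.2.tail⟩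
      rw [ih F.flatten F2 hF hfact1 hb1.tail hfact2 hb2.tail]

theorem stmt7 (w : List α) (hw : w ≠ []) (f1 f2 : List (List α))
    (h1 : IsInvLyndonFact f1 w) (hb1 : BorderProp f1)
    (h2 : IsInvLyndonFact f2 w) (hb2 : BorderProp f2) :
    f1 = f2 :=
  main_aux f1 w f2 hw h1 hb1 h2 hb2
end

section
/- Let ℓ_1, …, ℓ_h be anti-Lyndon words forming a non-increasing chain for the prefix order (ℓ_1 ≥_p ℓ_2 ≥_p … ≥_p ℓ_h, where x ≥_p y means y is a prefix of x). If ℓ_1 ≠ ℓ_2, then ℓ_1 is not a proper prefix of the concatenation ℓ_2 ⋯ ℓ_h. -/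
open List

variable {α : Type*} [LinearOrder α]

lemma not_lex_append' {r : α → α → Prop} (hr : ∀ a, ¬ r a a) :
    ∀ (b x : List α), ¬ List.Lex r (b ++ x) b := by
  intro b
  induction b with
  | nil => intro x h; cases h
  | cons a b ih =>
    intro x h
    cases h with
    | cons h => exact ih x h
    | rel h => exact hr a h

lemma antiLyndon_unbordered' (w : List α) (h : IsAntiLyndon w) : Unbordered w := by
  rintro b hb ⟨hpre, hne, hsuf⟩
  have hlex := h.2 b hsuf hne hb
  obtain ⟨x, hx⟩ := hpre
  subst hx
  exact not_lex_append' (r := fun a b : α => b < a) (fun a h => lt_irrefl a h) b x hlex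

lemma find_border' (l1 : List α) : ∀ (ms : List (List α)) (t : List α),
    t ≠ [] → t <:+ l1 → t.length < l1.length → t <+: ms.flatten →
    (∀ m ∈ ms, m <+: l1) → ∃ b, b ≠ [] ∧ IsBorder b l1 := by
  intro ms
  induction ms with
  | nil =>
    intro t ht _ _ hpre _
    simp only [flatten_nil, prefix_nil] at hpre
    exact absurd hpre ht
  | cons m ms ih =>
    intro t ht hsuf hlen hpre hm
    rw [flatten_cons] at hpre
    rcases prefix_or_prefix_of_prefix hpre (prefix_append m ms.flatten) with h | h
    · exact ⟨t, ht, h.trans (hm m (mem_cons_self (a := m) (l := ms))),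
        fun he => absurd (he ▸ hlen) (lt_irrefl _), hsuf⟩
    · obtain ⟨t', rfl⟩ := h
      rcases eq_or_ne t' [] with rfl | ht'
      · rw [append_nil] at *
        exact ⟨m, ht, hm m (mem_cons_self (a := m) (l := ms)),
          fun he => absurd (he ▸ hlen) (lt_irrefl _), hsuf⟩
      · refine ih t' ht' ((suffix_append m t').trans hsuf) ?_ ?_ ?_
        · calc t'.length ≤ (m ++ t').length := by simp
            _ < l1.length := hlen
        · exact (prefix_append_right_inj m).mp hpre
        · exact fun x hx => hm x (mem_cons_of_mem m hx)

theorem stmt8 (l1 l2 : List α) (rest : List (List α))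
    (hanti : ∀ m ∈ l1 :: l2 :: rest, IsAntiLyndon m)
    (hchain : List.Chain' (fun x y : List α => y <+: x) (l1 :: l2 :: rest))
    (hne : l1 ≠ l2) :
    ¬ (l1 <+: (l2 :: rest).flatten ∧ l1 ≠ (l2 :: rest).flatten) := by
  rintro ⟨hpre, hneq⟩
  have hul1 : Unbordered l1 := antiLyndon_unbordered' l1 (hanti l1 (by simp))
  have hl2ne : l2 ≠ [] := (hanti l2 (by simp)).1
  have h21 : l2 <+: l1 := hchain.rel_head
  obtain ⟨t, rfl⟩ := h21
  have htne : t ≠ [] := by rintro rfl; simp at hne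
  have hall : ∀ m ∈ rest, m <+: l2 ++ t := by
    haveI : IsTrans (List α) (fun x y : List α => y <+: x) :=
      ⟨fun a b c hab hbc => hbc.trans hab⟩
    have hp : List.Pairwise (fun x y : List α => y <+: x) ((l2 ++ t) :: l2 :: rest) :=
      isChain_iff_pairwise.mp hchain
    intro m hm
    exact (pairwise_cons.mp hp).1 m (mem_cons_of_mem l2 hm)
  rw [flatten_cons] at hpre
  have hpre' : t <+: rest.flatten := (prefix_append_right_inj l2).mp hpre
  have hlen : t.length < (l2 ++ t).length := by
    simp [List.length_pos_iff.mpr hl2ne]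
  obtain ⟨b, hb, hborder⟩ := find_border' (l2 ++ t) rest t htne (suffix_append l2 t) hlen hpre' hall
  exact hul1 b hb hborder
end

section
/- Let w be an inverse Lyndon word and ℓ a nonempty anti-Lyndon word. If ℓw is not an inverse Lyndon word, then ℓ ≪ w. -/
open List

variable {α : Type*} [LinearOrder α]

namespace Stmt11Aux

/-- Generic asymmetry of list lexicographic order. -/
lemma lex_asymm {r : α → α → Prop} (hr : ∀ a b, r a b → ¬ r b a) :
    ∀ {x y : List α}, List.Lex r x y → ¬ List.Lex r y x := by
  intro x y h
  induction h with
  | nil => exact fun h' => by cases h'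
  | @cons a l₁ l₂ h ih =>
    intro h'
    cases h' with
    | cons h'' => exact ih h''
    | rel hr' => exact hr _ _ hr' hr'
  | @rel a₁ l₁ a₂ l₂ hab =>
    intro h'
    cases h' with
    | cons h'' => exact hr _ _ hab hab
    | rel hr' => exact hr _ _ hab hr'

/-- Generic transitivity of list lexicographic order. -/
lemma lex_trans {r : α → α → Prop} (hr : ∀ a b c, r a b → r b c → r a c) :
    ∀ {x y z : List α}, List.Lex r x y → List.Lex r y z → List.Lex r x z := by
  intro x y z h
  induction h generalizing z with
  | nil =>
    intro h'
    cases h' with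
    | cons _ => exact List.Lex.nil
    | rel _ => exact List.Lex.nil
  | @cons a l₁ l₂ h ih =>
    intro h'
    cases h' with
    | cons h'' => exact List.Lex.cons (ih h'')
    | rel hr' => exact List.Lex.rel hr'
  | @rel a₁ l₁ a₂ l₂ hab =>
    intro h'
    cases h' with
    | cons h'' => exact List.Lex.rel hab
    | rel hr' => exact List.Lex.rel (hr _ _ _ hab hr')

lemma prec_trans {x y z : List α} (h1 : Prec x y) (h2 : Prec y z) : Prec x z :=
  lex_trans (r := (· < ·)) (fun _ _ _ hab hbc => lt_trans hab hbc) h1 h2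

lemma lex_trichotomy (x y : List α) :
    List.Lex (· < ·) x y ∨ x = y ∨ List.Lex (· < ·) y x :=
  trichotomous_of (List.Lex (· < ·)) x y

/-- A word is lexicographically smaller than any word it is a proper prefix of. -/
lemma lex_append_right_ne (r : α → α → Prop) (s : List α) {t : List α} (ht : t ≠ []) :
    List.Lex r s (s ++ t) := by
  induction s with
  | nil =>
    cases t with
    | nil => exact absurd rfl ht
    | cons a t => exact List.Lex.nil
  | cons a s ih => exact List.Lex.cons ih

/-- If `y` is a prefix of `x`, then `x` is not lexicographically smaller than `y`. -/
lemma not_lex_of_prefix {x y : List α} (h : y <+: x) : ¬ List.Lex (· < ·) x y := by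
  induction y generalizing x with
  | nil => intro h'; cases h'
  | cons a y ih =>
    obtain ⟨t, rfl⟩ := h
    intro h'
    cases h' with
    | cons h'' => exact ih ⟨t, rfl⟩ h''
    | rel hr' => exact lt_irrefl a hr'

/-- Cancel a common prefix. -/
lemma lex_of_append_left {p x y : List α} (h : List.Lex (· < ·) (p ++ x) (p ++ y)) :
    List.Lex (· < ·) x y := by
  induction p with
  | nil => exact h
  | cons a p ih =>
    cases h with
    | cons h'' => exact ih h''
    | rel hr' => exact absurd hr' (lt_irrefl a)

/-- If `l ++ u ≺ v` and `l` is not a prefix of `v`, then `l ≺ v`. -/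
lemma lex_of_append_lex {l : List α} :
    ∀ {u v : List α}, ¬ l <+: v → List.Lex (· < ·) (l ++ u) v → List.Lex (· < ·) l v := by
  induction l with
  | nil => intro u v hp _; exact absurd (List.nil_prefix) hp
  | cons a l ih =>
    intro u v hp h
    cases v with
    | nil => cases h
    | cons b v =>
      cases h with
      | cons h'' =>
        exact List.Lex.cons (ih (fun hl => hp (List.cons_prefix_cons.mpr ⟨rfl, hl⟩)) h'')
      | rel hr' => exact List.Lex.rel hr'

/-- If `x` precedes `y` in the inverse order and `x` is not a prefix of `y`,
then `y ++ u ≺ x ++ v` for any `u`, `v`. -/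
lemma lex_append_of_precIn {x : List α} :
    ∀ {y : List α} (u v : List α), List.Lex (fun a b : α => b < a) x y → ¬ x <+: y →
      List.Lex (· < ·) (y ++ u) (x ++ v) := by
  induction x with
  | nil => intro y u v _ hp; exact absurd (List.nil_prefix) hp
  | cons a x ih =>
    intro y u v h hp
    cases y with
    | nil => cases h
    | cons b y =>
      cases h with
      | cons h'' =>
        exact List.Lex.cons (ih u v h'' (fun hl => hp (List.cons_prefix_cons.mpr ⟨rfl, hl⟩)))
      | rel hr' => exact List.Lex.rel hr'

lemma suffix_append_cases {s l w : List α} (h : s <:+ l ++ w) :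
    s <:+ w ∨ ∃ s', s = s' ++ w ∧ s' <:+ l := by
  obtain ⟨t, ht⟩ := h
  rcases List.append_eq_append_iff.mp ht with ⟨a', h1, h2⟩ | ⟨c', h1, h2⟩
  · exact Or.inr ⟨a', h2, ⟨t, h1.symm⟩⟩
  · exact Or.inl ⟨c', h2.symm⟩

end Stmt11Aux

open Stmt11Aux in
theorem stmt11 (w l : List α) (hw : IsInvLyndon w) (hlne : l ≠ [])
    (hl : IsAntiLyndon l) (h : ¬ IsInvLyndon (l ++ w)) : LLt l w := by
  obtain ⟨hwne, hwsuf⟩ := hw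
  obtain ⟨-, hlsuf⟩ := hl
  -- extract a bad suffix
  have hbad : ∃ s : List α, s <:+ l ++ w ∧ s ≠ l ++ w ∧ s ≠ [] ∧ ¬ Prec s (l ++ w) := by
    by_contra hc
    push_neg at hc
    refine h ⟨by simp [hlne], fun s h1 h2 h3 => hc s h1 h2 h3⟩
  obtain ⟨s, hs1, hs2, hs3, hs4⟩ := hbad
  -- key: Prec (l ++ w) w
  have hkey : Prec (l ++ w) w := by
    rcases suffix_append_cases hs1 with hsw | ⟨s', rfl, hs'⟩
    · -- s is a suffix of w
      have hslen : s.length ≤ w.length := hsw.length_le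
      have hsne : s ≠ l ++ w := hs2
      have htri := lex_trichotomy s (l ++ w)
      rcases htri with h1 | h1 | h1
      · exact absurd h1 hs4
      · exact absurd h1 hsne
      · -- Lex (l++w) s
        by_cases hseq : s = w
        · subst hseq; exact h1
        · exact prec_trans h1 (hwsuf s hsw hseq hs3)
    · -- s = s' ++ w with s' suffix of l
      by_cases hs'nil : s' = []
      · subst hs'nil
        simp only [List.nil_append] at *
        have htri := lex_trichotomy w (l ++ w)
        rcases htri with h1 | h1 | h1
        · exact absurd h1 hs4
        · exact absurd h1 hs2
        · exact h1
      · -- s' is a nonempty suffix of l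
        exfalso
        have hs'ne : s' ≠ l := by
          rintro rfl; exact hs2 rfl
        have hpin : PrecIn l s' := hlsuf s' hs' hs'ne hs'nil
        have hnp : ¬ s' <+: l := by
          intro hpre
          obtain ⟨t, rfl⟩ := hpre
          have htne : t ≠ [] := by rintro rfl; simp at hs'ne
          have : PrecIn s' (s' ++ t) := lex_append_right_ne _ s' htne
          exact lex_asymm (fun a b h1 h2 => lt_asymm h1 h2) hpin this
        -- then s' ++ w ≺ l ++ w, contradiction with hs4
        refine hs4 ?_
        -- need l not prefix of s' : l is strictly longer? no. Use lex_append_of_precIn with x := l, y := s'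
        have hlp : ¬ l <+: s' := by
          intro hpre
          have h1 := hpre.length_le
          obtain ⟨t, rfl⟩ := hs'
          have htne : t ≠ [] := by rintro rfl; simp at hs'ne
          have h2 : (t ++ s').length = t.length + s'.length := List.length_append
          have h3 : 0 < t.length := List.length_pos_iff.mpr htne
          omega
        exact lex_append_of_precIn w w hpin hlp
  -- now derive LLt l w
  have hnp : ¬ l <+: w := by
    intro hpre
    obtain ⟨u, rfl⟩ := hpre
    have h1 : Prec (l ++ u) u := lex_of_append_left hkey
    by_cases hu : u = []
    · subst hu; simp only [List.append_nil] at h1; cases h1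
    · have h2 : Prec u (l ++ u) := by
        refine hwsuf u ⟨l, rfl⟩ ?_ hu
        intro he
        have h3 := congrArg List.length he
        simp only [List.length_append] at h3
        have h4 : 0 < l.length := List.length_pos_iff.mpr hlne
        omega
      exact lex_asymm (fun a b => lt_asymm) h1 h2
  exact ⟨lex_of_append_lex hnp hkey, fun hc => hnp hc.1⟩
end

section
/- Let w be an inverse Lyndon word and ℓ a nonempty anti-Lyndon word such that ℓw is not an inverse Lyndon word. Then for every k ≥ 1, w is the longest suffix of ℓ^k w that is an inverse Lyndon word. -/
open List

variable {α : Type*} [LinearOrder α]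

/-- Characterization of the lexicographic (strict) order. -/
private lemma lex_char {r : α → α → Prop} {x y : List α} (h : List.Lex r x y) :
    (x <+: y) ∨ ∃ p a b u v, x = p ++ a :: u ∧ y = p ++ b :: v ∧ r a b := by
  induction h with
  | nil => exact Or.inl (List.nil_prefix)
  | @rel a l₁ b l₂ hab => exact Or.inr ⟨[], a, b, l₁, l₂, rfl, rfl, hab⟩
  | @cons a l₁ l₂ _ ih =>
      rcases ih with hp | ⟨p, a', b', u', v', rfl, rfl, hr⟩
      · rcases hp with ⟨m, rfl⟩
        exact Or.inl ⟨m, rfl⟩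
      · exact Or.inr ⟨a :: p, a', b', u', v', rfl, rfl, hr⟩

private lemma lex_of_split {r : α → α → Prop} {a b : α} (h : r a b) (p u v : List α) :
    List.Lex r (p ++ a :: u) (p ++ b :: v) :=
  List.Lex.append_left r (List.Lex.rel h) p

private lemma lex_cancel {x y : List α} :
    ∀ (p : List α), List.Lex (· < ·) (p ++ x) (p ++ y) → List.Lex (· < ·) x y
  | [], h => h
  | _ :: p, h => lex_cancel p (List.lex_cons_iff.mp h)

/-- Decomposition of a suffix of `l^k`. -/
private lemma suffix_join_replicate (l : List α) (hlne : l ≠ []) :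
    ∀ (k : ℕ) (t : List α), t <:+ (List.replicate k l).flatten →
      ∃ t' j, t' <:+ l ∧ t' ≠ l ∧ t = t' ++ (List.replicate j l).flatten
  | 0, t, ht => by
      have h0 : (List.replicate 0 l).flatten = ([] : List α) := by simp
      rw [h0, List.suffix_nil] at ht
      exact ⟨[], 0, List.nil_suffix, fun he => hlne he.symm, by simp [ht, h0]⟩
  | (k+1), t, ht => by
      have hs : (List.replicate (k+1) l).flatten = l ++ (List.replicate k l).flatten := by
        simp [List.replicate_succ]
      rw [hs] at ht
      by_cases hle : t.length ≤ (List.replicate k l).flatten.length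
      · exact suffix_join_replicate l hlne k t
          (List.suffix_of_suffix_length_le ht (List.suffix_append _ _) hle)
      · push_neg at hle
        have hJt : (List.replicate k l).flatten <:+ t :=
          List.suffix_of_suffix_length_le (List.suffix_append _ _) ht hle.le
        obtain ⟨t'', rfl⟩ := hJt
        obtain ⟨x, hx⟩ := ht
        rw [← List.append_assoc] at hx
        have hxl : x ++ t'' = l := List.append_cancel_right hx
        by_cases ht'' : t'' = l
        · exact ⟨[], k + 1, List.nil_suffix, fun he => hlne he.symm, by rw [hs, ht'']; simp⟩
        · exact ⟨t'', k, ⟨x, hxl⟩, ht'', rfl⟩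

theorem stmt12 (w l : List α) (hw : IsInvLyndon w) (hlne : l ≠ [])
    (hl : IsAntiLyndon l) (h : ¬ IsInvLyndon (l ++ w)) :
    ∀ k : ℕ, 1 ≤ k →
      w <:+ (List.replicate k l).flatten ++ w ∧
      (∀ s : List α, s <:+ (List.replicate k l).flatten ++ w → IsInvLyndon s →
        s.length ≤ w.length) := by
  obtain ⟨hwne, hwsuf⟩ := hw
  have hlw_ne : l ++ w ≠ [] := by simp [hlne]
  -- a bad suffix of l ++ w
  have hbad : ∃ u : List α, u <:+ l ++ w ∧ u ≠ l ++ w ∧ u ≠ [] ∧ ¬ Prec u (l ++ w) := by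
    by_contra hc
    push_neg at hc
    exact h ⟨hlw_ne, fun s hs hne hnil => hc s hs hne hnil⟩
  -- anti-Lyndon characterization
  have hal : ∀ t' : List α, t' <:+ l → t' ≠ l → t' ≠ [] →
      ∃ q c c' u u', t' = q ++ c :: u ∧ l = q ++ c' :: u' ∧ c < c' := by
    intro t' hsuf hne hnil
    have hpi : List.Lex (fun a b : α => b < a) l t' := hl.2 t' hsuf hne hnil
    rcases lex_char hpi with hp | ⟨p, a, b, u, v, hl1, ht1, hr⟩
    · exact absurd ((hp.eq_of_length (le_antisymm hp.length_le hsuf.length_le)).symm) hne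
    · exact ⟨p, b, a, v, u, ht1, hl1, hr⟩
  -- key: l and w first differ at a position inside l, with l's letter smaller
  have key : ∃ p a b u v, l = p ++ a :: u ∧ w = p ++ b :: v ∧ a < b := by
    obtain ⟨u, husuf, hune, hunil, hunp⟩ := hbad
    have hlex_lw_u : List.Lex (· < ·) (l ++ w) u := by
      rcases trichotomous_of (List.Lex (· < · : α → α → Prop)) u (l ++ w) with h1 | h1 | h1
      · exact absurd h1 hunp
      · exact absurd h1 hune
      · exact h1
    have husufw : u <:+ w := by
      by_contra hcon
      have hlen : w.length < u.length := by
        by_contra hlen'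
        push_neg at hlen'
        exact hcon (List.suffix_of_suffix_length_le husuf (List.suffix_append l w) hlen')
      have hwsufu : w <:+ u := List.suffix_of_suffix_length_le (List.suffix_append l w) husuf hlen.le
      obtain ⟨v, rfl⟩ := hwsufu
      obtain ⟨x, hx⟩ := husuf
      rw [← List.append_assoc] at hx
      have hvl : x ++ v = l := List.append_cancel_right hx
      have hvne : v ≠ l := fun he => hune (by rw [he])
      have hvnil : v ≠ [] := by
        intro he
        rw [he] at hlen
        simp at hlen
      obtain ⟨q, c, c', uu, uu', hv, hl2, hcc⟩ := hal v ⟨x, hvl⟩ hvne hvnil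
      have hlt : List.Lex (· < ·) (v ++ w) (l ++ w) := by
        rw [hv, hl2, List.append_assoc, List.append_assoc]
        exact lex_of_split hcc q _ _
      exact absurd hlt (asymm hlex_lw_u)
    have hlex_lw_w : List.Lex (· < ·) (l ++ w) w := by
      rcases eq_or_ne u w with rfl | hne
      · exact hlex_lw_u
      · exact List.lex_trans lt_trans hlex_lw_u (hwsuf u husufw hne hunil)
    rcases lex_char hlex_lw_w with hp | ⟨p, a, b, u', v, hlw1, hw1, hab⟩
    · exfalso
      have := hp.length_le
      simp only [List.length_append] at this
      have : l.length = 0 := by omega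
      exact hlne (List.length_eq_zero_iff.mp this)
    · by_cases hpl : l.length ≤ p.length
      · exfalso
        have hppre : p <+: l ++ w := ⟨a :: u', hlw1.symm⟩
        have hlp : l <+: p := List.prefix_of_prefix_length_le (List.prefix_append l w) hppre hpl
        obtain ⟨m, rfl⟩ := hlp
        have hw2 : w = l ++ (m ++ b :: v) := by rw [hw1]; simp
        have hrsuf : (m ++ b :: v) <:+ w := ⟨l, hw2.symm⟩
        have hrnw : (m ++ b :: v) ≠ w := by
          intro he
          apply hlne
          rw [← he] at hw2
          have := congrArg List.length hw2
          simp only [List.length_append] at this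
          exact List.length_eq_zero_iff.mp (by omega)
        have h1 : List.Lex (· < ·) (m ++ b :: v) w := hwsuf _ hrsuf hrnw (by simp)
        have h2 : List.Lex (· < ·) w (m ++ b :: v) := by
          refine lex_cancel l ?_
          rw [← hw2]
          exact hlex_lw_w
        exact absurd h1 (asymm h2)
      · push_neg at hpl
        have hppre : p <+: l ++ w := ⟨a :: u', hlw1.symm⟩
        have hpl' : p <+: l := List.prefix_of_prefix_length_le hppre (List.prefix_append l w) hpl.le
        obtain ⟨m, hm⟩ := hpl'
        match m, hm with
        | [], hm => exact absurd (by rw [← hm]; simp) (ne_of_gt hpl)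
        | a₂ :: m', hm =>
          have h1 : (p ++ a₂ :: m') ++ w = p ++ a :: u' := by rw [hm, ← hlw1]
          rw [List.append_assoc] at h1
          have h3 : a₂ :: (m' ++ w) = a :: u' := List.append_cancel_left h1
          have ha : a₂ = a := by injection h3
          exact ⟨p, a, b, m', v, by rw [← hm, ha], hw1, hab⟩
  obtain ⟨p, a, b, u, v, hlp, hwp, hab⟩ := key
  subst hwp
  subst hlp
  intro k _hk
  refine ⟨List.suffix_append _ _, ?_⟩
  intro s hssuf hsinv
  by_contra hlen
  push_neg at hlen
  have hwsufs : (p ++ b :: v) <:+ s :=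
    List.suffix_of_suffix_length_le (List.suffix_append _ _) hssuf hlen.le
  obtain ⟨t, rfl⟩ := hwsufs
  have htnil : t ≠ [] := by
    intro he
    rw [he] at hlen
    simp at hlen
  obtain ⟨x, hx⟩ := hssuf
  rw [← List.append_assoc] at hx
  have htsuf : t <:+ (List.replicate k (p ++ a :: u)).flatten := ⟨x, List.append_cancel_right hx⟩
  obtain ⟨t', j, ht'suf, ht'ne, hteq⟩ :=
    suffix_join_replicate (p ++ a :: u) hlne k t htsuf
  have hwne_tw : (p ++ b :: v) ≠ t ++ (p ++ b :: v) := by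
    intro he
    have := congrArg List.length he
    simp only [List.length_append] at this
    exact htnil (List.length_eq_zero_iff.mp (by omega))
  have hwlts : List.Lex (· < ·) (p ++ b :: v) (t ++ (p ++ b :: v)) :=
    hsinv.2 _ (List.suffix_append _ _) hwne_tw hwne
  have hstw : List.Lex (· < ·) (t ++ (p ++ b :: v)) (p ++ b :: v) := by
    by_cases ht'nil : t' = []
    · -- t = l^j with j ≥ 1
      rw [ht'nil, List.nil_append] at hteq
      match j, hteq with
      | 0, hteq => exact absurd (by simpa using hteq) htnil
      | (j' + 1), hteq =>
        have hs : (List.replicate (j'+1) (p ++ a :: u)).flatten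
            = (p ++ a :: u) ++ (List.replicate j' (p ++ a :: u)).flatten := by
          simp [List.replicate_succ]
        rw [hteq, hs]
        simpa only [List.append_assoc, List.cons_append, List.nil_append]
          using lex_of_split hab p _ _
    · obtain ⟨q, c, c', u1, u1', ht'eq, hlq, hcc⟩ := hal t' ht'suf ht'ne ht'nil
      have hppre : p <+: p ++ a :: u := ⟨a :: u, rfl⟩
      have hqpre : q <+: p ++ a :: u := ⟨c' :: u1', hlq.symm⟩
      rcases le_or_gt p.length q.length with hle | hlt
      · -- p <+: q
        obtain ⟨m, hm⟩ := List.prefix_of_prefix_length_le hppre hqpre hle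
        match m, hm with
        | [], hm =>
          -- q = p, so c' = a, and c < c' = a < b
          rw [List.append_nil] at hm
          subst hm
          have hqa : c' :: u1' = a :: u := List.append_cancel_left hlq.symm
          have hc'a : c' = a := by injection hqa
          have hcb : c < b := lt_trans (hc'a ▸ hcc) hab
          rw [hteq, ht'eq]
          simpa only [List.append_assoc, List.cons_append, List.nil_append]
            using lex_of_split hcb p _ _
        | a₂ :: m', hm =>
          -- q = p ++ a :: m'
          have ha2 : a₂ = a := by
            have h1 : (p ++ a₂ :: m') ++ c' :: u1' = p ++ a :: u := by rw [hm, ← hlq]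
            rw [List.append_assoc] at h1
            have := List.append_cancel_left h1
            injection this
          have hq : q = p ++ a :: m' := by rw [← hm, ha2]
          rw [hteq, ht'eq, hq]
          simpa only [List.append_assoc, List.cons_append, List.nil_append]
            using lex_of_split hab p _ _
      · -- q <+: p, p = q ++ c' :: m'
        obtain ⟨m, hm⟩ := List.prefix_of_prefix_length_le hqpre hppre hlt.le
        match m, hm with
        | [], hm => exact absurd (by rw [← hm]; simp) (ne_of_gt hlt)
        | c₂ :: m', hm =>
          have hc2 : c₂ = c' := by
            have h1 : (q ++ c₂ :: m') ++ a :: u = q ++ c' :: u1' := by rw [hm, ← hlq]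
            rw [List.append_assoc] at h1
            have := List.append_cancel_left h1
            injection this
          have hp2 : p = q ++ c' :: m' := by rw [← hm, hc2]
          rw [hteq, ht'eq, hp2]
          simpa only [List.append_assoc, List.cons_append, List.nil_append]
            using lex_of_split hcc q _ _
  exact absurd hstw (asymm hwlts)
end

section
/- Let (m_1, …, m_k) be the (unique) inverse Lyndon factorization with the border property of a nonempty word w. Then the last factor m_k is the longest suffix of w which is an inverse Lyndon word. -/
open List

variable {α : Type*} [LinearOrder α]

private lemma lexAsymm {x y : List α} (h1 : List.Lex (· < ·) x y)
    (h2 : List.Lex (· < ·) y x) : False :=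
  Std.Asymm.asymm (r := List.Lex (· < ·) (α := α)) x y h1 h2

/-- First-difference characterization of strict lex when not a prefix. -/
private lemma lex_exists {x y : List α} (h : List.Lex (· < ·) x y) (hnp : ¬ x <+: y) :
    ∃ (r : List α) (a b : α), a < b ∧ r ++ [a] <+: x ∧ r ++ [b] <+: y := by
  induction h with
  | nil => exact absurd List.nil_prefix hnp
  | @cons a l₁ l₂ h ih =>
      have hnp' : ¬ l₁ <+: l₂ := fun hp => hnp (List.cons_prefix_cons.2 ⟨rfl, hp⟩)
      obtain ⟨r, c, d, hcd, hrc, hrd⟩ := ih hnp'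
      exact ⟨a :: r, c, d, hcd, List.cons_prefix_cons.2 ⟨rfl, hrc⟩,
        List.cons_prefix_cons.2 ⟨rfl, hrd⟩⟩
  | rel hab =>
      exact ⟨[], _, _, hab, ⟨_, rfl⟩, ⟨_, rfl⟩⟩

/-- A common prefix followed by a smaller letter forces strict lex. -/
private lemma lex_of_pref {r : List α} {a b : α} (hab : a < b) :
    ∀ {x y : List α}, r ++ [a] <+: x → r ++ [b] <+: y → List.Lex (· < ·) x y := by
  induction r with
  | nil =>
      intro x y hx hy
      obtain ⟨t, ht⟩ := hx; obtain ⟨t', ht'⟩ := hy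
      subst ht; subst ht'
      exact List.Lex.rel hab
  | cons c r ih =>
      intro x y hx hy
      obtain ⟨t, ht⟩ := hx; obtain ⟨t', ht'⟩ := hy
      subst ht; subst ht'
      exact List.Lex.cons (ih ⟨t, by simp⟩ ⟨t', by simp⟩)

private lemma join_cons' (m : List α) (l : List (List α)) :
    (m :: l).flatten = m ++ l.flatten := rfl

private lemma getLast_suffix_join : ∀ (ms : List (List α)) (hne : ms ≠ []),
    ms.getLast hne <:+ ms.flatten := by
  intro ms
  induction ms with
  | nil => intro h; exact absurd rfl h
  | cons m rest ih =>
      intro _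
      cases rest with
      | nil => simp
      | cons m' r =>
          have h := ih (by simp)
          rw [List.getLast_cons (by simp)]
          exact h.trans (by rw [join_cons']; exact List.suffix_append _ _)

/-- The core contradiction: an inverse Lyndon word cannot be `u ++ v` with `u`
a nonempty suffix of `m`, `m ≪ m'`, the border property between `m` and `m'`,
and `v` starting with `m'`. -/
private lemma core {m m' u v : List α} (hm : IsInvLyndon m) (hmm' : LLt m m')
    (hbp : ∀ b : List α, b ≠ [] → IsBorder b m → ¬ b <+: m')
    (hu : u <:+ m) (hune : u ≠ []) (hm'v : m' <+: v)
    (hsil : IsInvLyndon (u ++ v)) : False := by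
  obtain ⟨hp, hnpp⟩ := hmm'
  have hmne : m ≠ m' := by rintro rfl; exact lexAsymm hp hp
  have hm'ne : m' ≠ [] := by rintro rfl; cases hp
  have hnp : ¬ m <+: m' := fun h => hnpp ⟨h, hmne⟩
  obtain ⟨r, c, d, hcd, hrc, hrd⟩ := lex_exists hp hnp
  have hvne : v ≠ [] := by
    rintro rfl; exact hm'ne (List.prefix_nil.mp hm'v)
  have hvs : v <:+ u ++ v := List.suffix_append _ _
  have hvneq : v ≠ u ++ v := by
    intro h
    have := congrArg List.length h
    have h3 : v.length = u.length + v.length := by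
      conv_lhs => rw [h]
      simp
    exact hune (List.length_eq_zero_iff.mp (by omega))
  have hvlex : List.Lex (· < ·) v (u ++ v) := hsil.2 v hvs hvneq hvne
  have hrdv : r ++ [d] <+: v := hrd.trans hm'v
  -- in every case we derive Lex (u ++ v) v, contradicting hvlex
  refine lexAsymm ?_ hvlex
  by_cases hum : u = m
  · subst hum
    exact lex_of_pref hcd (hrc.trans (List.prefix_append _ _)) hrdv
  · have hulex : List.Lex (· < ·) u m := hm.2 u hu hum hune
    by_cases hupm : u <+: m
    · have hbord : IsBorder u m := ⟨hupm, hum, hu⟩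
      have hnupm' : ¬ u <+: m' := hbp u hune hbord
      rcases le_or_gt u.length r.length with hle | hlt
      · exfalso
        have hrm : r <+: m := (List.prefix_append r [c]).trans hrc
        have hur : u <+: r := List.prefix_of_prefix_length_le hupm hrm hle
        exact hnupm' (hur.trans ((List.prefix_append r [d]).trans hrd))
      · have hrcu : r ++ [c] <+: u := by
          refine List.prefix_of_prefix_length_le hrc hupm ?_
          simpa using hlt
        exact lex_of_pref hcd (hrcu.trans (List.prefix_append _ _)) hrdv
    · obtain ⟨q, a, b, hab, hqa, hqb⟩ := lex_exists hulex hupm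
      have hqas : q ++ [a] <+: u ++ v := hqa.trans (List.prefix_append _ _)
      rcases lt_trichotomy q.length r.length with hlt | heq | hgt
      · have hqbr : q ++ [b] <+: r := by
          refine List.prefix_of_prefix_length_le hqb
            ((List.prefix_append r [c]).trans hrc) ?_
          simpa using hlt
        have h2 : q ++ [b] <+: v :=
          (hqbr.trans ((List.prefix_append r [d]).trans hrd)).trans hm'v
        exact lex_of_pref hab hqas h2
      · have hlen : (q ++ [b]).length = (r ++ [c]).length := by simp [heq]
        have heq2 : q ++ [b] = r ++ [c] :=
          (List.prefix_of_prefix_length_le hqb hrc hlen.le).eq_of_length hlen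
        obtain ⟨hqr, hbc⟩ := List.append_inj' heq2 (by simp)
        have hbc' : b = c := by simpa using hbc
        subst hqr
        exact lex_of_pref (lt_trans (hbc' ▸ hab) hcd) hqas hrdv
      · have hrcq : r ++ [c] <+: q := by
          refine List.prefix_of_prefix_length_le ?_ (List.prefix_append q [b]) ?_
          · exact List.prefix_of_prefix_length_le hrc hqb (by simp; omega)
          · simpa using hgt
        have h1 : r ++ [c] <+: u ++ v :=
          ((hrcq.trans (List.prefix_append q [a])).trans hqa).trans (List.prefix_append _ _)
        exact lex_of_pref hcd h1 hrdv

/-- Suffix of a suffix by length comparison. -/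
private lemma suffix_of_suffix_le {s t u : List α} (hs : s <:+ u) (ht : t <:+ u)
    (h : s.length ≤ t.length) : s <:+ t := by
  rw [← List.reverse_prefix] at hs ht ⊢
  exact List.prefix_of_prefix_length_le hs ht (by simpa using h)

private lemma key : ∀ (ms : List (List α)) (hne : ms ≠ []),
    (∀ m ∈ ms, IsInvLyndon m) → List.Chain' LLt ms → BorderProp ms →
    ∀ s : List α, s <:+ ms.flatten → IsInvLyndon s →
      s.length ≤ (ms.getLast hne).length := by
  intro ms
  induction ms with
  | nil => intro h; exact absurd rfl h
  | cons m rest ih =>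
      intro _ hall hch hbp s hs hsil
      cases rest with
      | nil =>
          rw [join_cons'] at hs
          simp only [List.flatten, List.flatten_nil, List.append_nil] at hs
          simpa using hs.length_le
      | cons m' r =>
          have hne' : (m' :: r : List (List α)) ≠ [] := by simp
          rw [List.getLast_cons (by simp)]
          have hvsuf : (m' :: r).flatten <:+ (m :: m' :: r).flatten := by
            rw [join_cons']; exact List.suffix_append _ _
          rcases le_or_gt s.length ((m' :: r).flatten).length with hle | hlt
          · have hs' : s <:+ (m' :: r).flatten := suffix_of_suffix_le hs hvsuf hle
            exact ih hne' (fun x hx => hall x (List.mem_cons_of_mem _ hx))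
              hch.tail hbp.tail s hs' hsil
          · exfalso
            -- s = u ++ v with u a nonempty suffix of m
            set v := (m' :: r).flatten with hv
            have hvs : v <:+ s := suffix_of_suffix_le hvsuf hs hlt.le
            obtain ⟨u, huv⟩ := hvs
            have hune : u ≠ [] := by
              rintro rfl
              rw [List.nil_append] at huv
              subst huv
              exact lt_irrefl _ hlt
            have hum : u <:+ m := by
              obtain ⟨p, hp⟩ := hs
              rw [join_cons', ← huv, ← List.append_assoc] at hp
              exact ⟨p, List.append_cancel_right hp⟩
            have hmm' : LLt m m' := (List.isChain_cons_cons.mp hch).1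
            have hbp1 : ∀ b : List α, b ≠ [] → IsBorder b m → ¬ b <+: m' :=
              (List.isChain_cons_cons.mp hbp).1
            have hm'v : m' <+: v := by
              rw [hv, join_cons']; exact List.prefix_append _ _
            exact core (hall m (List.mem_cons_self)) hmm' hbp1 hum hune hm'v
              (huv ▸ hsil)

theorem stmt13 (w : List α) (hw : w ≠ []) (ms : List (List α))
    (hf : IsInvLyndonFact ms w) (hb : BorderProp ms) (hne : ms ≠ []) :
    ms.getLast hne <:+ w ∧
    (∀ s : List α, s <:+ w → IsInvLyndon s → s.length ≤ (ms.getLast hne).length) := by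
  obtain ⟨-, hjoin, hall, hch⟩ := hf
  subst hjoin
  exact ⟨getLast_suffix_join ms hne, fun s hs hsil => key ms hne hall hch hb s hs hsil⟩
end
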